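/- In the finite-horizon setting with horizon N: (i) for every Borel set S ⊆ 𝕋×𝕏 one has Θⁿ(S) = Θ^N(S) for all n ≥ N, and Θ^N(S) is an equilibrium (Θ(Θ^N(S)) = Θ^N(S)); (ii) for any two Borel sets S, S' ⊆ 𝕋×𝕏, Θ^N(S) = Θ^N(S'). Consequently, there exists a unique equilibrium. -/

import Mathlib

open MeasureTheory ProbabilityTheory Set Filter Topology
open scoped ENNReal ENat

noncomputable section

/-- The σ-algebra generated by the first `n+1` coordinates of the path space:
the natural filtration of the coordinate process at time `n`. -/
def pathSigma (𝕏 : Type*) [m : MeasurableSpace 𝕏] (n : ℕ) : MeasurableSpace (ℕ → 𝕏) :=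
  ⨆ i ∈ Finset.range (n + 1), MeasurableSpace.comap (fun ω : ℕ → 𝕏 => ω i) m

/-- `Pr` is the family of laws of the time-homogeneous Markov chain with one-step
transition kernel `Q`: under `Pr x` the chain starts at `x`, and the Markov property
`Pr^x(X_{n+1} ∈ A | 𝓕_n) = Q(X_n, A)` holds. -/
structure IsMarkovChainLaw {𝕏 : Type*} [MeasurableSpace 𝕏]
    (Pr : Kernel 𝕏 (ℕ → 𝕏)) (Q : Kernel 𝕏 𝕏) : Prop where
  start : ∀ x : 𝕏, Pr x {ω | ω 0 = x} = 1
  markov : ∀ (x : 𝕏) (n : ℕ) (B : Set (ℕ → 𝕏)), MeasurableSet[pathSigma 𝕏 n] B →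
    ∀ A : Set 𝕏, MeasurableSet A →
      Pr x (B ∩ {ω | ω (n + 1) ∈ A}) = ∫⁻ ω in B, Q (ω n) A ∂(Pr x)

/-- The capped hitting time `ρ(t,x,S) = min (inf {s ≥ t+1 : (s, X_s) ∈ S}) N` along
the path `ω`, where `ω s` represents the state `X_{t+s}` of the chain started at time `t`. -/
def hitTimeFin {𝕏 : Type*} (N t : ℕ) (S : Set (ℕ × 𝕏)) (ω : ℕ → 𝕏) : ℕ :=
  sInf {s : ℕ | (t + 1 ≤ s ∧ (s, ω (s - t)) ∈ S) ∨ s = N}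

/-- The objective value `J(t, x, ρ(t,x,S)) = 𝔼^{t,x}[δ(ρ(t,x,S) − t) f(X_{ρ(t,x,S)})]`. -/
def valJFin {𝕏 : Type*} [MeasurableSpace 𝕏] (Pr : Kernel 𝕏 (ℕ → 𝕏)) (δ : ℕ → ℝ) (f : 𝕏 → ℝ)
    (N t : ℕ) (S : Set (ℕ × 𝕏)) (x : 𝕏) : ℝ :=
  ∫ ω, δ (hitTimeFin N t S ω - t) * f (ω (hitTimeFin N t S ω - t)) ∂(Pr x)

/-- The finite-horizon operator `Θ(S) = {(t,x) ∈ 𝕋×𝕏 : f(x) ≥ J(t, x, ρ(t,x,S))}`,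
where `𝕋 = {0, 1, ..., N−1}`. -/
def ΘFin {𝕏 : Type*} [MeasurableSpace 𝕏] (Pr : Kernel 𝕏 (ℕ → 𝕏)) (δ : ℕ → ℝ) (f : 𝕏 → ℝ)
    (N : ℕ) (S : Set (ℕ × 𝕏)) : Set (ℕ × 𝕏) :=
  {p | p.1 < N ∧ valJFin Pr δ f N p.1 S p.2 ≤ f p.2}

-- hitting time congruence
lemma hitTimeFin_congr {𝕏 : Type*} {N t : ℕ} {S S' : Set (ℕ × 𝕏)}
    (h : ∀ p : ℕ × 𝕏, t < p.1 → (p ∈ S ↔ p ∈ S')) (ω : ℕ → 𝕏) :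
    hitTimeFin N t S ω = hitTimeFin N t S' ω := by
  unfold hitTimeFin
  congr 1
  ext s
  constructor <;> rintro (⟨hs, hmem⟩ | rfl)
  · exact Or.inl ⟨hs, (h (s, ω (s - t)) hs).1 hmem⟩
  · exact Or.inr rfl
  · exact Or.inl ⟨hs, (h (s, ω (s - t)) hs).2 hmem⟩
  · exact Or.inr rfl

lemma valJFin_congr {𝕏 : Type*} [MeasurableSpace 𝕏] (Pr : Kernel 𝕏 (ℕ → 𝕏)) (δ : ℕ → ℝ)
    (f : 𝕏 → ℝ) {N t : ℕ} {S S' : Set (ℕ × 𝕏)}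
    (h : ∀ p : ℕ × 𝕏, t < p.1 → (p ∈ S ↔ p ∈ S')) (x : 𝕏) :
    valJFin Pr δ f N t S x = valJFin Pr δ f N t S' x := by
  unfold valJFin
  congr 1
  ext ω
  rw [hitTimeFin_congr h ω]

lemma ΘFin_congr {𝕏 : Type*} [MeasurableSpace 𝕏] (Pr : Kernel 𝕏 (ℕ → 𝕏)) (δ : ℕ → ℝ)
    (f : 𝕏 → ℝ) {N m : ℕ} {S S' : Set (ℕ × 𝕏)}
    (h : ∀ p : ℕ × 𝕏, m ≤ p.1 → (p ∈ S ↔ p ∈ S')) :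
    ∀ p : ℕ × 𝕏, m - 1 ≤ p.1 → (p ∈ ΘFin Pr δ f N S ↔ p ∈ ΘFin Pr δ f N S') := by
  intro p hp
  have hJ : valJFin Pr δ f N p.1 S p.2 = valJFin Pr δ f N p.1 S' p.2 :=
    valJFin_congr Pr δ f (fun q hq => h q (by omega)) p.2
  simp only [ΘFin, Set.mem_setOf_eq, hJ]

lemma ΘFin_iter_congr {𝕏 : Type*} [MeasurableSpace 𝕏] (Pr : Kernel 𝕏 (ℕ → 𝕏)) (δ : ℕ → ℝ)
    (f : 𝕏 → ℝ) (N : ℕ) :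
    ∀ (k m : ℕ) (S S' : Set (ℕ × 𝕏)), (∀ p : ℕ × 𝕏, m ≤ p.1 → (p ∈ S ↔ p ∈ S')) →
      ∀ p : ℕ × 𝕏, m - k ≤ p.1 → (p ∈ (ΘFin Pr δ f N)^[k] S ↔ p ∈ (ΘFin Pr δ f N)^[k] S') := by
  intro k
  induction k with
  | zero => intro m S S' h p hp; exact h p (by simpa using hp)
  | succ k ih =>
    intro m S S' h p hp
    rw [Function.iterate_succ_apply, Function.iterate_succ_apply]
    exact ih (m - 1) _ _ (ΘFin_congr Pr δ f h) p (by omega)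

lemma ΘFin_iter_eq {𝕏 : Type*} [MeasurableSpace 𝕏] (Pr : Kernel 𝕏 (ℕ → 𝕏)) (δ : ℕ → ℝ)
    (f : 𝕏 → ℝ) (N : ℕ) {S S' : Set (ℕ × 𝕏)}
    (hS : S ⊆ {p : ℕ × 𝕏 | p.1 < N}) (hS' : S' ⊆ {p : ℕ × 𝕏 | p.1 < N}) :
    (ΘFin Pr δ f N)^[N] S = (ΘFin Pr δ f N)^[N] S' := by
  ext p
  refine ΘFin_iter_congr Pr δ f N N N S S' ?_ p (by omega)
  intro q hq
  constructor <;> intro hmem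
  · exact absurd (hS hmem) (by simp; omega)
  · exact absurd (hS' hmem) (by simp; omega)

lemma ΘFin_subset {𝕏 : Type*} [MeasurableSpace 𝕏] (Pr : Kernel 𝕏 (ℕ → 𝕏)) (δ : ℕ → ℝ)
    (f : 𝕏 → ℝ) (N : ℕ) (S : Set (ℕ × 𝕏)) : ΘFin Pr δ f N S ⊆ {p : ℕ × 𝕏 | p.1 < N} :=
  fun _ hp => hp.1

-- measurability
lemma hitTimeFin_eq_iff {𝕏 : Type*} {N t : ℕ} {S : Set (ℕ × 𝕏)} {ω : ℕ → 𝕏} {s : ℕ} :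
    hitTimeFin N t S ω = s ↔
      ((t + 1 ≤ s ∧ (s, ω (s - t)) ∈ S) ∨ s = N) ∧
        ∀ j < s, ¬((t + 1 ≤ j ∧ (j, ω (j - t)) ∈ S) ∨ j = N) := by
  unfold hitTimeFin
  set A : Set ℕ := {s : ℕ | (t + 1 ≤ s ∧ (s, ω (s - t)) ∈ S) ∨ s = N} with hAdef
  have hA : A.Nonempty := ⟨N, Or.inr rfl⟩
  have hmemA : ∀ j : ℕ, (j ∈ A) = ((t + 1 ≤ j ∧ (j, ω (j - t)) ∈ S) ∨ j = N) := fun j => rfl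
  constructor
  · rintro rfl
    refine ⟨(hmemA _) ▸ Nat.sInf_mem hA, fun j hj => ?_⟩
    rw [← hmemA]
    exact Nat.notMem_of_lt_sInf hj
  · rintro ⟨hmem, hlt⟩
    rw [← hmemA] at hmem
    refine le_antisymm (Nat.sInf_le hmem) ?_
    by_contra hc
    push_neg at hc
    exact (hmemA _ ▸ hlt _ hc) (Nat.sInf_mem hA)

lemma measurable_hitTimeFin {𝕏 : Type*} [MeasurableSpace 𝕏] {N t : ℕ} {S : Set (ℕ × 𝕏)}
    (hS : MeasurableSet S) : Measurable (hitTimeFin N t S) := by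
  apply measurable_to_countable'
  intro s
  have hset : ∀ j : ℕ, MeasurableSet {ω : ℕ → 𝕏 |
      (t + 1 ≤ j ∧ (j, ω (j - t)) ∈ S) ∨ j = N} := by
    intro j
    by_cases hj : j = N
    · simp [hj]
    by_cases hj' : t + 1 ≤ j
    · have : {ω : ℕ → 𝕏 | (t + 1 ≤ j ∧ (j, ω (j - t)) ∈ S) ∨ j = N}
          = (fun ω : ℕ → 𝕏 => ω (j - t)) ⁻¹' {y | (j, y) ∈ S} := by
        ext ω; simp [hj, hj']
      rw [this]
      exact (measurable_pi_apply _) (measurable_prodMk_left hS)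
    · have : {ω : ℕ → 𝕏 | (t + 1 ≤ j ∧ (j, ω (j - t)) ∈ S) ∨ j = N} = ∅ := by
        ext ω; simp [hj, hj']
      rw [this]; exact MeasurableSet.empty
  have : (hitTimeFin N t S) ⁻¹' {s}
      = {ω : ℕ → 𝕏 | (t + 1 ≤ s ∧ (s, ω (s - t)) ∈ S) ∨ s = N}
        ∩ ⋂ j ∈ Finset.range s, {ω : ℕ → 𝕏 | (t + 1 ≤ j ∧ (j, ω (j - t)) ∈ S) ∨ j = N}ᶜ := by
    ext ω
    simp only [Set.mem_preimage, Set.mem_singleton_iff, hitTimeFin_eq_iff, Set.mem_inter_iff,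
      Set.mem_setOf_eq, Set.mem_iInter, Set.mem_compl_iff, Finset.mem_range]
  rw [this]
  exact (hset s).inter (MeasurableSet.iInter fun j => MeasurableSet.iInter fun _ => (hset j).compl)

lemma measurable_eval_var {𝕏 : Type*} [MeasurableSpace 𝕏] {k : (ℕ → 𝕏) → ℕ}
    (hk : Measurable k) : Measurable fun ω : ℕ → 𝕏 => ω (k ω) := by
  have h1 : Measurable fun p : (ℕ → 𝕏) × ℕ => p.1 p.2 :=
    measurable_from_prod_countable_left fun n => measurable_pi_apply n
  exact h1.comp (measurable_id.prodMk hk)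

lemma measurable_valJFin {𝕏 : Type*} [MeasurableSpace 𝕏] (Pr : Kernel 𝕏 (ℕ → 𝕏))
    [IsMarkovKernel Pr] (δ : ℕ → ℝ) (f : 𝕏 → ℝ) (hf : Measurable f) (N t : ℕ)
    {S : Set (ℕ × 𝕏)} (hS : MeasurableSet S) :
    Measurable (valJFin Pr δ f N t S) := by
  have hh : Measurable (hitTimeFin N t S) := measurable_hitTimeFin hS
  have hg : Measurable fun ω : ℕ → 𝕏 =>
      δ (hitTimeFin N t S ω - t) * f (ω (hitTimeFin N t S ω - t)) := by
    have h1 : Measurable fun ω : ℕ → 𝕏 => δ (hitTimeFin N t S ω - t) :=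
      (Measurable.of_discrete (f := fun n : ℕ => δ (n - t))).comp hh
    have h2 : Measurable fun ω : ℕ → 𝕏 => f (ω (hitTimeFin N t S ω - t)) :=
      hf.comp (measurable_eval_var (hh.sub measurable_const))
    exact h1.mul h2
  have hsm : StronglyMeasurable (Function.uncurry fun (_ : 𝕏) (ω : ℕ → 𝕏) =>
      δ (hitTimeFin N t S ω - t) * f (ω (hitTimeFin N t S ω - t))) :=
    (hg.comp measurable_snd).stronglyMeasurable
  exact (hsm.integral_kernel_prod_right (κ := Pr)).measurable

lemma measurableSet_ΘFin {𝕏 : Type*} [MeasurableSpace 𝕏] (Pr : Kernel 𝕏 (ℕ → 𝕏))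
    [IsMarkovKernel Pr] (δ : ℕ → ℝ) (f : 𝕏 → ℝ) (hf : Measurable f) (N : ℕ)
    {S : Set (ℕ × 𝕏)} (hS : MeasurableSet S) : MeasurableSet (ΘFin Pr δ f N S) := by
  have : ΘFin Pr δ f N S = ⋃ t : ℕ,
      ({t} : Set ℕ) ×ˢ {x : 𝕏 | t < N ∧ valJFin Pr δ f N t S x ≤ f x} := by
    ext p
    simp only [ΘFin, Set.mem_setOf_eq, Set.mem_iUnion, Set.mem_prod, Set.mem_singleton_iff]
    constructor
    · rintro ⟨h1, h2⟩; exact ⟨p.1, rfl, h1, h2⟩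
    · rintro ⟨t, rfl, h1, h2⟩; exact ⟨h1, h2⟩
  rw [this]
  refine MeasurableSet.iUnion fun t => (measurableSet_singleton t).prod ?_
  by_cases ht : t < N
  · have : {x : 𝕏 | t < N ∧ valJFin Pr δ f N t S x ≤ f x}
        = {x : 𝕏 | valJFin Pr δ f N t S x ≤ f x} := by ext x; simp [ht]
    rw [this]
    exact measurableSet_le (measurable_valJFin Pr δ f hf N t hS) hf
  · have : {x : 𝕏 | t < N ∧ valJFin Pr δ f N t S x ≤ f x} = ∅ := by ext x; simp [ht]
    simp [this]

/-- In the finite-horizon setting: (i) for every Borel `S ⊆ 𝕋×𝕏`, `Θⁿ(S) = Θᴺ(S)` for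
all `n ≥ N` and `Θᴺ(S)` is an equilibrium; (ii) `Θᴺ(S)` does not depend on `S`.
Consequently there exists a unique equilibrium. -/
theorem finite_horizon_unique_equilibrium
    {𝕏 : Type*} [TopologicalSpace 𝕏] [PolishSpace 𝕏] [MeasurableSpace 𝕏] [BorelSpace 𝕏]
    (Pr : Kernel 𝕏 (ℕ → 𝕏)) [IsMarkovKernel Pr] (Q : Kernel 𝕏 𝕏) [IsMarkovKernel Q]
    (hchain : IsMarkovChainLaw Pr Q)
    (f : 𝕏 → ℝ) (hf_meas : Measurable f) (hf_nonneg : ∀ x, 0 ≤ f x)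
    (hf_bdd : ∃ C : ℝ, ∀ x, f x ≤ C)
    (δ : ℕ → ℝ) (hδ_mem : ∀ k, δ k ∈ Set.Icc (0 : ℝ) 1) (hδ_anti : StrictAnti δ)
    (hδ_zero : δ 0 = 1) (hδ_lim : Tendsto δ atTop (𝓝 0))
    (N : ℕ) (hN : 0 < N) :
    (∀ S : Set (ℕ × 𝕏), MeasurableSet S → S ⊆ {p : ℕ × 𝕏 | p.1 < N} →
      (∀ n : ℕ, N ≤ n → (ΘFin Pr δ f N)^[n] S = (ΘFin Pr δ f N)^[N] S) ∧
      ΘFin Pr δ f N ((ΘFin Pr δ f N)^[N] S) = (ΘFin Pr δ f N)^[N] S) ∧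
    (∀ S S' : Set (ℕ × 𝕏), MeasurableSet S → S ⊆ {p : ℕ × 𝕏 | p.1 < N} →
      MeasurableSet S' → S' ⊆ {p : ℕ × 𝕏 | p.1 < N} →
      (ΘFin Pr δ f N)^[N] S = (ΘFin Pr δ f N)^[N] S') ∧
    (∃! E : Set (ℕ × 𝕏), MeasurableSet E ∧ ΘFin Pr δ f N E = E) := by
  set Θ := ΘFin Pr δ f N with hΘ
  have hsub : ∀ S : Set (ℕ × 𝕏), Θ S ⊆ {p : ℕ × 𝕏 | p.1 < N} :=
    fun S => ΘFin_subset Pr δ f N S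
  have hii : ∀ S S' : Set (ℕ × 𝕏), S ⊆ {p : ℕ × 𝕏 | p.1 < N} →
      S' ⊆ {p : ℕ × 𝕏 | p.1 < N} → Θ^[N] S = Θ^[N] S' :=
    fun S S' h h' => ΘFin_iter_eq Pr δ f N h h'
  have hiter_sub : ∀ (k : ℕ) (S : Set (ℕ × 𝕏)), S ⊆ {p : ℕ × 𝕏 | p.1 < N} →
      Θ^[k] S ⊆ {p : ℕ × 𝕏 | p.1 < N} := by
    intro k S hS
    cases k with
    | zero => exact hS
    | succ k => rw [Function.iterate_succ_apply']; exact hsub _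
  have hi : ∀ S : Set (ℕ × 𝕏), S ⊆ {p : ℕ × 𝕏 | p.1 < N} →
      ∀ n, N ≤ n → Θ^[n] S = Θ^[N] S := by
    intro S hS n hn
    have h1 : Θ^[n] S = Θ^[N] (Θ^[n - N] S) := by
      rw [← Function.iterate_add_apply]
      congr 1
      omega
    rw [h1]
    exact hii _ _ (hiter_sub _ _ hS) hS
  have hfix : ∀ S : Set (ℕ × 𝕏), S ⊆ {p : ℕ × 𝕏 | p.1 < N} → Θ (Θ^[N] S) = Θ^[N] S := by
    intro S hS
    have h1 := hi S hS (N + 1) (by omega)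
    rwa [Function.iterate_succ_apply'] at h1
  refine ⟨fun S _ hSsub => ⟨fun n hn => hi S hSsub n hn, hfix S hSsub⟩,
    fun S S' _ h1 _ h2 => hii S S' h1 h2, ?_⟩
  have hmeas_iter : ∀ k, MeasurableSet (Θ^[k] (∅ : Set (ℕ × 𝕏))) := by
    intro k
    induction k with
    | zero => exact MeasurableSet.empty
    | succ k ih =>
      rw [Function.iterate_succ_apply']
      exact measurableSet_ΘFin Pr δ f hf_meas N ih
  refine ⟨Θ^[N] ∅, ⟨hmeas_iter N, hfix ∅ (Set.empty_subset _)⟩, ?_⟩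
  rintro E ⟨hEm, hEfix⟩
  have hEsub : E ⊆ {p : ℕ × 𝕏 | p.1 < N} := by rw [← hEfix]; exact hsub E
  have hEk : ∀ k, Θ^[k] E = E := by
    intro k
    induction k with
    | zero => rfl
    | succ k ih => rw [Function.iterate_succ_apply', ih, hEfix]
  rw [← hEk N]
  exact hii E ∅ hEsub (Set.empty_subset _)

end
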